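/- The set of stable matchings of any instance, ordered by the men's dominance relation, forms a lattice: every pair of stable matchings has a least upper bound and a greatest lower bound within the set of stable matchings. -/
import Mathlib


open Finset

/-- A stable matching instance: `n` men and `n` women; `mrank m w` is the
(0-indexed) rank of woman `w` in man `m`'s strict preference list (lower = more
preferred); `wrank w m` analogously. -/
structure SMInstance (n : ℕ) where
  mrank : Fin n → Fin n → Fin n
  wrank : Fin n → Fin n → Fin n
  mbij : ∀ m, Function.Bijective (mrank m)
  wbij : ∀ w, Function.Bijective (wrank w)

namespace SMInstance

variable {n : ℕ}

/-- `(m, w)` is a blocking pair of the perfect matching `μ`. -/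
def Blocking (I : SMInstance n) (μ : Equiv.Perm (Fin n)) (m w : Fin n) : Prop :=
  μ m ≠ w ∧ I.mrank m w < I.mrank m (μ m) ∧ I.wrank w m < I.wrank w (μ.symm w)

/-- A matching is stable if it admits no blocking pair. -/
def Stable (I : SMInstance n) (μ : Equiv.Perm (Fin n)) : Prop :=
  ∀ m w, ¬ I.Blocking μ m w

/-- Total (1-indexed) rank of partners over men. -/
def SM (I : SMInstance n) (μ : Equiv.Perm (Fin n)) : ℤ :=
  ∑ m : Fin n, (((I.mrank m (μ m) : ℕ) : ℤ) + 1)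

/-- Total (1-indexed) rank of partners over women. -/
def SW (I : SMInstance n) (μ : Equiv.Perm (Fin n)) : ℤ :=
  ∑ w : Fin n, (((I.wrank w (μ.symm w) : ℕ) : ℤ) + 1)

/-- The sex-equality cost of a matching. -/
def cost (I : SMInstance n) (μ : Equiv.Perm (Fin n)) : ℤ :=
  |I.SM μ - I.SW μ|

end SMInstance

/-- `μ'` dominates `μ` for the men: every man weakly prefers his partner in `μ'`. -/
def Dominates {n : ℕ} (I : SMInstance n) (μ' μ : Equiv.Perm (Fin n)) : Prop :=
  ∀ m : Fin n, I.mrank m (μ' m) ≤ I.mrank m (μ m)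

namespace SMLattice

variable {n : ℕ}

/-- For man `m`, the preferred of his two partners. -/
def better (I : SMInstance n) (μ₁ μ₂ : Equiv.Perm (Fin n)) (m : Fin n) : Fin n :=
  if I.mrank m (μ₁ m) ≤ I.mrank m (μ₂ m) then μ₁ m else μ₂ m

/-- For man `m`, the less preferred of his two partners. -/
def worse (I : SMInstance n) (μ₁ μ₂ : Equiv.Perm (Fin n)) (m : Fin n) : Fin n :=
  if I.mrank m (μ₁ m) ≤ I.mrank m (μ₂ m) then μ₂ m else μ₁ m

lemma pair_cases (I : SMInstance n) (μ₁ μ₂ : Equiv.Perm (Fin n)) (m : Fin n) :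
    (better I μ₁ μ₂ m = μ₁ m ∧ worse I μ₁ μ₂ m = μ₂ m) ∨
    (better I μ₁ μ₂ m = μ₂ m ∧ worse I μ₁ μ₂ m = μ₁ m) := by
  unfold better worse; split
  · exact Or.inl ⟨rfl, rfl⟩
  · exact Or.inr ⟨rfl, rfl⟩

lemma better_le₁ (I : SMInstance n) (μ₁ μ₂ : Equiv.Perm (Fin n)) (m : Fin n) :
    I.mrank m (better I μ₁ μ₂ m) ≤ I.mrank m (μ₁ m) := by
  unfold better; split
  · exact le_rfl
  · exact le_of_not_ge ‹_›

lemma better_le₂ (I : SMInstance n) (μ₁ μ₂ : Equiv.Perm (Fin n)) (m : Fin n) :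
    I.mrank m (better I μ₁ μ₂ m) ≤ I.mrank m (μ₂ m) := by
  unfold better; split
  · exact ‹_›
  · exact le_rfl

lemma le_worse₁ (I : SMInstance n) (μ₁ μ₂ : Equiv.Perm (Fin n)) (m : Fin n) :
    I.mrank m (μ₁ m) ≤ I.mrank m (worse I μ₁ μ₂ m) := by
  unfold worse; split
  · exact ‹_›
  · exact le_rfl

lemma le_worse₂ (I : SMInstance n) (μ₁ μ₂ : Equiv.Perm (Fin n)) (m : Fin n) :
    I.mrank m (μ₂ m) ≤ I.mrank m (worse I μ₁ μ₂ m) := by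
  unfold worse; split
  · exact le_rfl
  · exact le_of_not_ge ‹_›

lemma worse_comm (I : SMInstance n) (μ₁ μ₂ : Equiv.Perm (Fin n)) :
    worse I μ₂ μ₁ = worse I μ₁ μ₂ := by
  funext m
  unfold worse
  rcases lt_trichotomy (I.mrank m (μ₁ m)) (I.mrank m (μ₂ m)) with h | h | h
  · rw [if_neg (not_le_of_gt h), if_pos (le_of_lt h)]
  · have he : μ₁ m = μ₂ m := (I.mbij m).injective h
    simp [he]
  · rw [if_pos (le_of_lt h), if_neg (not_le_of_gt h)]

lemma better_comm (I : SMInstance n) (μ₁ μ₂ : Equiv.Perm (Fin n)) :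
    better I μ₂ μ₁ = better I μ₁ μ₂ := by
  funext m
  unfold better
  rcases lt_trichotomy (I.mrank m (μ₁ m)) (I.mrank m (μ₂ m)) with h | h | h
  · rw [if_neg (not_le_of_gt h), if_pos (le_of_lt h)]
  · have he : μ₁ m = μ₂ m := (I.mbij m).injective h
    simp [he]
  · rw [if_pos (le_of_lt h), if_neg (not_le_of_gt h)]

lemma ne_of_mrank_lt {I : SMInstance n} {m w w' : Fin n}
    (h : I.mrank m w < I.mrank m w') : w' ≠ w := by
  intro he; rw [he] at h; exact lt_irrefl _ h

lemma mrank_lt_of_le_of_ne {I : SMInstance n} {m w w' : Fin n}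
    (h : I.mrank m w ≤ I.mrank m w') (hne : w ≠ w') :
    I.mrank m w < I.mrank m w' :=
  lt_of_le_of_ne h (fun he => hne ((I.mbij m).injective he))

lemma wrank_lt_or {I : SMInstance n} {w m m' : Fin n} (hne : m ≠ m') :
    I.wrank w m < I.wrank w m' ∨ I.wrank w m' < I.wrank w m :=
  lt_or_gt_of_ne (fun he => hne ((I.wbij w).injective he))

/-- If some man `m` strictly prefers `w = ν m'` to his `ν`-partner and `w`
strictly prefers `m` to `m'`, then `ν` is not stable. -/
lemma block_aux (I : SMInstance n) (ν : Equiv.Perm (Fin n)) (h : I.Stable ν)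
    {m w m' : Fin n} (hw1 : ν m' = w)
    (hmr : I.mrank m w < I.mrank m (ν m))
    (hwr : I.wrank w m < I.wrank w m') : False := by
  have hs : ν.symm w = m' := (Equiv.symm_apply_eq ν).mpr hw1.symm
  exact h m w ⟨ne_of_mrank_lt hmr, hmr, by rwa [hs]⟩

/-- Core contradiction used to show the join is injective. -/
lemma mixed_contra (I : SMInstance n) (μ₁ μ₂ : Equiv.Perm (Fin n))
    (h₁ : I.Stable μ₁) (h₂ : I.Stable μ₂) {a b : Fin n} (hne : a ≠ b)
    (hw : μ₁ a = μ₂ b)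
    (hra : I.mrank a (μ₁ a) ≤ I.mrank a (μ₂ a))
    (hrb : I.mrank b (μ₂ b) ≤ I.mrank b (μ₁ b)) : False := by
  have hμ₂a : μ₂ a ≠ μ₁ a := fun h => hne (μ₂.injective (h.trans hw))
  have hμ₁b : μ₁ b ≠ μ₂ b := fun h => hne (μ₁.injective (h.trans hw.symm)).symm
  have hra' : I.mrank a (μ₁ a) < I.mrank a (μ₂ a) :=
    mrank_lt_of_le_of_ne hra (fun h => hμ₂a h.symm)
  have hrb' : I.mrank b (μ₂ b) < I.mrank b (μ₁ b) :=
    mrank_lt_of_le_of_ne hrb (fun h => hμ₁b h.symm)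
  rcases wrank_lt_or (I := I) (w := μ₁ a) hne with h | h
  · exact block_aux I μ₂ h₂ hw.symm hra' h
  · refine block_aux I μ₁ h₁ (m := b) (w := μ₂ b) (m' := a) hw ?_ ?_
    · exact hrb'
    · rw [← hw]; exact h

lemma better_inj (I : SMInstance n) (μ₁ μ₂ : Equiv.Perm (Fin n))
    (h₁ : I.Stable μ₁) (h₂ : I.Stable μ₂) :
    Function.Injective (better I μ₁ μ₂) := by
  intro a b hab
  by_contra hne
  rcases pair_cases I μ₁ μ₂ a with ⟨ha, _⟩ | ⟨ha, _⟩ <;>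
    rcases pair_cases I μ₁ μ₂ b with ⟨hb, _⟩ | ⟨hb, _⟩
  · exact hne (μ₁.injective ((ha.symm.trans hab).trans hb))
  · exact mixed_contra I μ₁ μ₂ h₁ h₂ hne ((ha.symm.trans hab).trans hb)
      (ha ▸ better_le₂ I μ₁ μ₂ a) (hb ▸ better_le₁ I μ₁ μ₂ b)
  · exact mixed_contra I μ₂ μ₁ h₂ h₁ hne ((ha.symm.trans hab).trans hb)
      (ha ▸ better_le₁ I μ₁ μ₂ a) (hb ▸ better_le₂ I μ₁ μ₂ b)
  · exact hne (μ₂.injective ((ha.symm.trans hab).trans hb))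

lemma better_bij (I : SMInstance n) (μ₁ μ₂ : Equiv.Perm (Fin n))
    (h₁ : I.Stable μ₁) (h₂ : I.Stable μ₂) :
    Function.Bijective (better I μ₁ μ₂) :=
  Finite.injective_iff_bijective.mp (better_inj I μ₁ μ₂ h₁ h₂)

/-- Mixed-case contradiction for injectivity of the meet, via surjectivity of
the join. -/
lemma worse_mixed (I : SMInstance n) (ν₁ ν₂ : Equiv.Perm (Fin n))
    (hsurj : Function.Surjective (better I ν₁ ν₂)) {a b : Fin n} (hne : a ≠ b)
    (hab : worse I ν₁ ν₂ a = worse I ν₁ ν₂ b)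
    (ha : worse I ν₁ ν₂ a = ν₁ a) (hb : worse I ν₁ ν₂ b = ν₂ b) : False := by
  have hw : ν₁ a = ν₂ b := (ha.symm.trans hab).trans hb
  have hν₂a : ν₂ a ≠ ν₁ a := fun h => hne (ν₂.injective (h.trans hw))
  have hν₁b : ν₁ b ≠ ν₁ a := fun h => hne (ν₁.injective h).symm
  obtain ⟨m₀, hm₀⟩ := hsurj (ν₁ a)
  rcases pair_cases I ν₁ ν₂ m₀ with ⟨h', _⟩ | ⟨h', _⟩
  · have hma : m₀ = a := ν₁.injective (h'.symm.trans hm₀)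
    rw [hma] at hm₀
    -- better a = ν₁ a and worse a = ν₁ a force ν₂ a = ν₁ a
    rcases pair_cases I ν₁ ν₂ a with ⟨_, h''⟩ | ⟨h'', _⟩
    · exact hν₂a (h''.symm.trans ha)
    · exact hν₂a (h''.symm.trans hm₀)
  · have hmb : m₀ = b := ν₂.injective ((h'.symm.trans hm₀).trans hw)
    rw [hmb] at hm₀
    -- better b = ν₁ a and worse b = ν₂ b = ν₁ a force ν₁ b = ν₁ a
    rcases pair_cases I ν₁ ν₂ b with ⟨h'', _⟩ | ⟨_, h''⟩
    · exact hν₁b (h''.symm.trans hm₀)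
    · exact hν₁b (h''.symm.trans (hb.trans hw.symm))

lemma worse_inj (I : SMInstance n) (μ₁ μ₂ : Equiv.Perm (Fin n))
    (h₁ : I.Stable μ₁) (h₂ : I.Stable μ₂) :
    Function.Injective (worse I μ₁ μ₂) := by
  have hsurj := (better_bij I μ₁ μ₂ h₁ h₂).2
  have hsurj' : Function.Surjective (better I μ₂ μ₁) := by
    rw [better_comm]; exact hsurj
  intro a b hab
  by_contra hne
  rcases pair_cases I μ₁ μ₂ a with ⟨_, ha⟩ | ⟨_, ha⟩ <;>
    rcases pair_cases I μ₁ μ₂ b with ⟨_, hb⟩ | ⟨_, hb⟩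
  · -- worse a = μ₂ a, worse b = μ₂ b
    exact hne (μ₂.injective ((ha.symm.trans hab).trans hb))
  · -- worse a = μ₂ a, worse b = μ₁ b : apply with matchings swapped
    refine worse_mixed I μ₂ μ₁ hsurj' hne ?_ ?_ ?_ <;>
      rw [worse_comm I μ₁ μ₂] <;> assumption
  · exact worse_mixed I μ₁ μ₂ hsurj hne hab ha hb
  · exact hne (μ₁.injective ((ha.symm.trans hab).trans hb))

/-- Core step in the stability of the meet. -/
lemma worse_aux (I : SMInstance n) (ν₁ ν₂ : Equiv.Perm (Fin n))
    (h₁ : I.Stable ν₁) (h₂ : I.Stable ν₂)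
    (hinj : Function.Injective (worse I ν₁ ν₂)) {m w m' : Fin n}
    (hm'w : worse I ν₁ ν₂ m' = w) (hw1 : ν₁ m' = w)
    (hmr : I.mrank m w < I.mrank m (worse I ν₁ ν₂ m))
    (hwr : I.wrank w m < I.wrank w m') : False := by
  by_cases hx : I.mrank m w < I.mrank m (ν₁ m)
  · exact block_aux I ν₁ h₁ hw1 hx hwr
  push_neg at hx
  have hwm : worse I ν₁ ν₂ m = ν₂ m := by
    rcases pair_cases I ν₁ ν₂ m with ⟨_, h⟩ | ⟨_, h⟩
    · exact h
    · rw [h] at hmr; exact absurd hmr (not_lt_of_ge hx)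
  rw [hwm] at hmr
  set m'' := ν₂.symm w with hm''def
  have hm'' : ν₂ m'' = w := ν₂.apply_symm_apply w
  by_cases hc : m'' = m'
  · exact block_aux I ν₂ h₂ hm'' hmr (hc ▸ hwr)
  rcases wrank_lt_or (I := I) (w := w) hc with hlt | hlt
  · -- w prefers m'' (her ν₂-partner) to m' ; derive a contradiction
    have hν₁m'' : ν₁ m'' ≠ w := fun h => hc (ν₁.injective (h.trans hw1.symm))
    by_cases hd : I.mrank m'' w < I.mrank m'' (ν₁ m'')
    · exact block_aux I ν₁ h₁ hw1 hd hlt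
    push_neg at hd
    have hd' : I.mrank m'' (ν₁ m'') < I.mrank m'' w :=
      mrank_lt_of_le_of_ne hd hν₁m''
    have hwm'' : worse I ν₁ ν₂ m'' = ν₂ m'' := by
      rcases pair_cases I ν₁ ν₂ m'' with ⟨_, h⟩ | ⟨_, h⟩
      · exact h
      · have hle := le_worse₂ I ν₁ ν₂ m''
        rw [h, hm''] at hle
        exact absurd (lt_of_le_of_lt hle hd') (lt_irrefl _)
    exact hc (hinj ((hwm''.trans hm'').trans hm'w.symm))
  · exact block_aux I ν₂ h₂ hm'' hmr (lt_trans hwr hlt)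

end SMLattice

/-- the set of stable matchings, ordered by men's dominance, forms
a lattice: every pair of stable matchings has a least upper bound and a greatest
lower bound within the set of stable matchings. -/
theorem stable_matchings_lattice {n : ℕ} (I : SMInstance n)
    (μ₁ μ₂ : Equiv.Perm (Fin n)) (h₁ : I.Stable μ₁) (h₂ : I.Stable μ₂) :
    (∃ σ : Equiv.Perm (Fin n), I.Stable σ ∧
        Dominates I σ μ₁ ∧ Dominates I σ μ₂ ∧
        ∀ ν : Equiv.Perm (Fin n), I.Stable ν →
          Dominates I ν μ₁ → Dominates I ν μ₂ → Dominates I ν σ) ∧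
      (∃ τ : Equiv.Perm (Fin n), I.Stable τ ∧
        Dominates I μ₁ τ ∧ Dominates I μ₂ τ ∧
        ∀ ν : Equiv.Perm (Fin n), I.Stable ν →
          Dominates I μ₁ ν → Dominates I μ₂ ν → Dominates I τ ν) := by
  have hbbij := SMLattice.better_bij I μ₁ μ₂ h₁ h₂
  have hwinj := SMLattice.worse_inj I μ₁ μ₂ h₁ h₂
  have hwbij : Function.Bijective (SMLattice.worse I μ₁ μ₂) :=
    Finite.injective_iff_bijective.mp hwinj
  set σ : Equiv.Perm (Fin n) := Equiv.ofBijective _ hbbij with hσdef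
  set τ : Equiv.Perm (Fin n) := Equiv.ofBijective _ hwbij with hτdef
  have hσapp : ∀ m, σ m = SMLattice.better I μ₁ μ₂ m := fun _ => rfl
  have hτapp : ∀ m, τ m = SMLattice.worse I μ₁ μ₂ m := fun _ => rfl
  constructor
  · refine ⟨σ, ?_, ?_, ?_, ?_⟩
    · rintro m w ⟨hne, hm, hw⟩
      rw [hσapp] at hm
      have hσm' : SMLattice.better I μ₁ μ₂ (σ.symm w) = w := σ.apply_symm_apply w
      rcases SMLattice.pair_cases I μ₁ μ₂ (σ.symm w) with ⟨hb, _⟩ | ⟨hb, _⟩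
      · exact SMLattice.block_aux I μ₁ h₁ (hb.symm.trans hσm')
          (lt_of_lt_of_le hm (SMLattice.better_le₁ I μ₁ μ₂ m)) hw
      · exact SMLattice.block_aux I μ₂ h₂ (hb.symm.trans hσm')
          (lt_of_lt_of_le hm (SMLattice.better_le₂ I μ₁ μ₂ m)) hw
    · intro m; rw [hσapp]; exact SMLattice.better_le₁ I μ₁ μ₂ m
    · intro m; rw [hσapp]; exact SMLattice.better_le₂ I μ₁ μ₂ m
    · intro ν _ d1 d2 m
      rw [hσapp]
      rcases SMLattice.pair_cases I μ₁ μ₂ m with ⟨hb, _⟩ | ⟨hb, _⟩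
      · rw [hb]; exact d1 m
      · rw [hb]; exact d2 m
  · refine ⟨τ, ?_, ?_, ?_, ?_⟩
    · rintro m w ⟨hne, hm, hw⟩
      rw [hτapp] at hm
      have hτm' : SMLattice.worse I μ₁ μ₂ (τ.symm w) = w := τ.apply_symm_apply w
      rcases SMLattice.pair_cases I μ₁ μ₂ (τ.symm w) with ⟨_, hb⟩ | ⟨_, hb⟩
      · -- worse (τ.symm w) = μ₂ (τ.symm w)
        have hcomm := SMLattice.worse_comm I μ₁ μ₂
        refine SMLattice.worse_aux I μ₂ μ₁ h₂ h₁ ?_ ?_ (hb.symm.trans hτm') ?_ hw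
        · rw [hcomm]; exact hwinj
        · rw [hcomm]; exact hτm'
        · rw [hcomm]; exact hm
      · exact SMLattice.worse_aux I μ₁ μ₂ h₁ h₂ hwinj hτm' (hb.symm.trans hτm') hm hw
    · intro m; rw [hτapp]; exact SMLattice.le_worse₁ I μ₁ μ₂ m
    · intro m; rw [hτapp]; exact SMLattice.le_worse₂ I μ₁ μ₂ m
    · intro ν _ d1 d2 m
      rw [hτapp]
      rcases SMLattice.pair_cases I μ₁ μ₂ m with ⟨_, hb⟩ | ⟨_, hb⟩
      · rw [hb]; exact d2 m
      · rw [hb]; exact d1 m
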